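/- Let (A, ∘) be an anti-pre-Lie algebra. Then the bracket [x,y] = x∘y - y∘x satisfies the Jacobi identity and skew-symmetry, so (A, [,]) is a Lie algebra. -/
import Mathlib


/-- An anti-pre-Lie algebra structure on a vector space `A`. -/
def IsAntiPreLie {k A : Type*} [Field k] [AddCommGroup A] [Module k A]
    (c : A →ₗ[k] A →ₗ[k] A) : Prop :=
  (∀ x y z, c x (c y z) - c y (c x z) = c (c y x - c x y) z) ∧
  (∀ x y z, c (c x y - c y x) z + c (c y z - c z y) x + c (c z x - c x z) y = 0)

/-- the commutator bracket `[x,y] = x∘y - y∘x` of an anti-pre-Lie algebra is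
skew-symmetric and satisfies the Jacobi identity, so it defines a Lie algebra. -/
theorem antiPreLie_commutator_lie {k A : Type*} [Field k] [AddCommGroup A] [Module k A]
    (c : A →ₗ[k] A →ₗ[k] A) (h : IsAntiPreLie c) :
    (∀ x y : A, c x y - c y x = -(c y x - c x y)) ∧
    (∀ x y z : A,
      (c (c x y - c y x) z - c z (c x y - c y x)) +
      (c (c y z - c z y) x - c x (c y z - c z y)) +
      (c (c z x - c x z) y - c y (c z x - c x z)) = 0) := by
  obtain ⟨h1, h2⟩ := h
  refine ⟨fun x y => by abel, fun x y z => ?_⟩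
  have e1 := h1 x y z
  have e2 := h1 y z x
  have e3 := h1 z x y
  have e4 := h2 x y z
  simp only [map_sub, LinearMap.sub_apply] at *
  linear_combination (norm := abel) e4 + e4 - e1 - e2 - e3
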